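/- For all real numbers x, y with 0 ≤ x < 1 and 0 ≤ y ≤ 1, 4·F_{1,1}(x,y) = li₂( x(1+y)/(1+x) ) − li₂( x(1−y)/(1+x) ) − li₂( −x(1+y)/(1−x) ) + li₂( −x(1−y)/(1−x) ). -/

import Mathlib

open Real MeasureTheory intervalIntegral

/-- `F_{1,1}(x,y) = ∑_{n≥0} (x^(2n+1)/(2n+1)) ∑_{m=0}^n y^(2m+1)/(2m+1)` (real). -/
noncomputable def F11 (x y : ℝ) : ℝ :=
  ∑' n : ℕ, (x ^ (2 * n + 1) / ((2 * n + 1 : ℕ) : ℝ)) *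
    ∑ m ∈ Finset.range (n + 1), y ^ (2 * m + 1) / ((2 * m + 1 : ℕ) : ℝ)

/-- The dilogarithm for real arguments `z < 1`: `li₂(z) = −∫₀¹ log(1 − z t)/t dt`. -/
noncomputable def li2 (z : ℝ) : ℝ := -∫ t in (0:ℝ)..1, Real.log (1 - z * t) / t

open Filter

/-- continuous extension of `-log(1-u)/u`, the derivative of `li2`. -/
noncomputable def dgl (u : ℝ) : ℝ := if u = 0 then 1 else -Real.log (1 - u) / u

/-- continuous extension of `artanh u / u`. -/
noncomputable def gat (u : ℝ) : ℝ :=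
  if u = 0 then 1 else (Real.log (1 + u) - Real.log (1 - u)) / (2 * u)

lemma dgl_contAt {u : ℝ} (hu : u < 1) : ContinuousAt dgl u := by
  rcases eq_or_ne u 0 with rfl | hne
  · have hd : HasDerivAt (fun v : ℝ => -Real.log (1 - v)) 1 0 := by
      have h1 : HasDerivAt (fun v : ℝ => 1 - v) (-1) 0 := by
        simpa using (hasDerivAt_id (0:ℝ)).const_sub 1
      have h2 : HasDerivAt (fun v : ℝ => Real.log (1 - v)) (-1) 0 := by
        have := (Real.hasDerivAt_log (by norm_num : (1:ℝ) - 0 ≠ 0)).comp 0 h1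
        simpa [Function.comp_def] using this
      have h3 := h2.neg
      simp only [neg_neg] at h3
      exact h3
    rw [hasDerivAt_iff_tendsto_slope] at hd
    have hslope : ∀ v : ℝ, v ≠ 0 → slope (fun v : ℝ => -Real.log (1 - v)) 0 v = dgl v := by
      intro v hv
      simp [slope_def_field, dgl, hv, div_eq_div_iff, sub_zero]
    have htend : Filter.Tendsto dgl (nhdsWithin 0 {(0:ℝ)}ᶜ) (nhds 1) := by
      refine hd.congr' ?_
      filter_upwards [self_mem_nhdsWithin] with v hv
      exact hslope v hv
    have : Filter.Tendsto dgl (nhds (0:ℝ)) (nhds 1) := by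
      rw [← nhdsNE_sup_pure]
      refine htend.sup ?_
      simpa [dgl] using tendsto_pure_nhds dgl 0
    simpa [ContinuousAt, dgl] using this
  · have hopen : IsOpen {v : ℝ | v ≠ 0} := isOpen_compl_singleton
    have heq : ∀ᶠ v in nhds u, dgl v = -Real.log (1 - v) / v := by
      filter_upwards [hopen.mem_nhds hne] with v hv
      simp [dgl, hv]
    have hc : ContinuousAt (fun v : ℝ => -Real.log (1 - v) / v) u := by
      have hl : ContinuousAt (fun v : ℝ => Real.log (1 - v)) u :=
        (Real.continuousAt_log (by linarith)).comp (by fun_prop)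
      exact hl.neg.div continuousAt_id hne
    exact hc.congr (Filter.EventuallyEq.symm heq)

lemma ae_ne_zero : ∀ᵐ u : ℝ, u ≠ 0 := by
  rw [MeasureTheory.ae_iff]
  simpa using measure_singleton (0:ℝ)

lemma li2_eq_integral (z : ℝ) : li2 z = ∫ u in (0:ℝ)..z, dgl u := by
  rcases eq_or_ne z 0 with rfl | hz
  · simp [li2]
  · have key : (fun t : ℝ => Real.log (1 - z * t) / t)
        = fun t => z * ((fun u : ℝ => Real.log (1 - u) / u) (z * t)) := by
      funext t
      rcases eq_or_ne t 0 with rfl | ht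
      · simp
      · have hzt : z * t ≠ 0 := mul_ne_zero hz ht
        field_simp
    rw [li2, key, intervalIntegral.integral_const_mul,
      intervalIntegral.integral_comp_mul_left (fun u : ℝ => Real.log (1 - u) / u) hz]
    simp only [mul_zero, mul_one, smul_eq_mul, ← mul_assoc, mul_inv_cancel₀ hz, one_mul]
    rw [← intervalIntegral.integral_neg]
    refine intervalIntegral.integral_congr_ae ?_
    filter_upwards [ae_ne_zero] with u hu _
    simp [dgl, hu, neg_div]

lemma li2_hasDerivAt {z : ℝ} (hz : z < 1) : HasDerivAt li2 (dgl z) z := by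
  have hfun : li2 = fun w => ∫ u in (0:ℝ)..w, dgl u := funext li2_eq_integral
  rw [hfun]
  have hconOn : ContinuousOn dgl (Set.Iio 1) := fun v hv => (dgl_contAt hv).continuousWithinAt
  refine intervalIntegral.integral_hasDerivAt_right ?_ ?_ (dgl_contAt hz)
  · refine (hconOn.mono ?_).intervalIntegrable
    intro v hv
    rcases Set.mem_uIcc.1 hv with ⟨_, h2⟩ | ⟨_, h2⟩
    · exact lt_of_le_of_lt h2 hz
    · exact lt_of_le_of_lt h2 (by norm_num)
  · exact hconOn.stronglyMeasurableAtFilter isOpen_Iio _ hz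

lemma li2_zero : li2 0 = 0 := by simp [li2]

lemma gat_hasSum {u : ℝ} (hu : |u| < 1) :
    HasSum (fun n : ℕ => u ^ (2 * n) / ((2 * n + 1 : ℕ) : ℝ)) (gat u) := by
  rcases eq_or_ne u 0 with rfl | hne
  · have : (fun n : ℕ => (0:ℝ) ^ (2 * n) / ((2 * n + 1 : ℕ) : ℝ)) =
        fun n : ℕ => if n = 0 then 1 else 0 := by
      funext n
      rcases Nat.eq_zero_or_pos n with rfl | hn
      · norm_num
      · rw [if_neg hn.ne', zero_pow (by omega), zero_div]
    rw [this]
    simpa [gat] using hasSum_ite_eq (0 : ℕ) (1:ℝ)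
  · have h := (hasSum_log_sub_log_of_abs_lt_one hu).div_const (2 * u)
    rw [gat, if_neg hne]
    have hf : (fun n : ℕ => u ^ (2 * n) / ((2 * n + 1 : ℕ) : ℝ))
        = fun i : ℕ => 2 * (1 / (2 * (i:ℝ) + 1)) * u ^ (2 * i + 1) / (2 * u) := by
      funext n
      have : ((2 * n + 1 : ℕ) : ℝ) = 2 * (n:ℝ) + 1 := by push_cast; ring
      rw [this]
      field_simp
      ring
    rw [hf]
    exact h

lemma gat_contAt {u : ℝ} (h1 : -1 < u) (h2 : u < 1) : ContinuousAt gat u := by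
  rcases eq_or_ne u 0 with rfl | hne
  · have hd : HasDerivAt (fun v : ℝ => (Real.log (1 + v) - Real.log (1 - v)) / 2) 1 0 := by
      have ha : HasDerivAt (fun v : ℝ => Real.log (1 + v)) 1 0 := by
        have h1 : HasDerivAt (fun v : ℝ => 1 + v) 1 0 := by
          simpa using (hasDerivAt_id (0:ℝ)).const_add 1
        simpa [Function.comp_def] using (Real.hasDerivAt_log (by norm_num : (1:ℝ) + 0 ≠ 0)).comp 0 h1
      have hb : HasDerivAt (fun v : ℝ => Real.log (1 - v)) (-1) 0 := by
        have h1 : HasDerivAt (fun v : ℝ => 1 - v) (-1) 0 := by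
          simpa using (hasDerivAt_id (0:ℝ)).const_sub 1
        simpa [Function.comp_def] using (Real.hasDerivAt_log (by norm_num : (1:ℝ) - 0 ≠ 0)).comp 0 h1
      have := (ha.sub hb).div_const 2
      norm_num at this
      exact this
    rw [hasDerivAt_iff_tendsto_slope] at hd
    have htend : Tendsto gat (nhdsWithin 0 {(0:ℝ)}ᶜ) (nhds 1) := by
      refine hd.congr' ?_
      filter_upwards [self_mem_nhdsWithin] with v hv
      have hv' : v ≠ 0 := hv
      simp only [slope_def_field, gat, if_neg hv']
      rw [sub_zero]
      norm_num
      ring_nf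
    have : Tendsto gat (nhds (0:ℝ)) (nhds 1) := by
      rw [← nhdsNE_sup_pure]
      refine htend.sup ?_
      simpa [gat] using tendsto_pure_nhds gat 0
    simpa [ContinuousAt, gat] using this
  · have hopen : IsOpen {v : ℝ | v ≠ 0} := isOpen_compl_singleton
    have heq : ∀ᶠ v in nhds u, (fun w => (Real.log (1 + w) - Real.log (1 - w)) / (2 * w)) v
        = gat v := by
      filter_upwards [hopen.mem_nhds hne] with v hv
      simp [gat, hv]
    have hc : ContinuousAt (fun w : ℝ => (Real.log (1 + w) - Real.log (1 - w)) / (2 * w)) u := by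
      have hl1 : ContinuousAt (fun w : ℝ => Real.log (1 + w)) u :=
        (Real.continuousAt_log (by linarith)).comp (by fun_prop)
      have hl2 : ContinuousAt (fun w : ℝ => Real.log (1 - w)) u :=
        (Real.continuousAt_log (by linarith)).comp (by fun_prop)
      exact (hl1.sub hl2).div (by fun_prop) (by simpa using hne)
    exact hc.congr heq

/-- partial sums of the odd series. -/
noncomputable def cP (y : ℝ) (n : ℕ) : ℝ :=
  ∑ m ∈ Finset.range (n + 1), y ^ (2 * m + 1) / ((2 * m + 1 : ℕ) : ℝ)

lemma cP_nonneg {y : ℝ} (hy : 0 ≤ y) (n : ℕ) : 0 ≤ cP y n :=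
  Finset.sum_nonneg fun m _ => div_nonneg (pow_nonneg hy _) (by positivity)

lemma cP_le {y : ℝ} (hy0 : 0 ≤ y) (hy1 : y ≤ 1) (n : ℕ) : cP y n ≤ (n : ℝ) + 1 := by
  have h : cP y n ≤ ∑ m ∈ Finset.range (n + 1), (1:ℝ) := by
    refine Finset.sum_le_sum fun m _ => ?_
    have h1 : y ^ (2 * m + 1) ≤ 1 := pow_le_one₀ hy0 hy1
    have h2 : (1:ℝ) ≤ ((2 * m + 1 : ℕ) : ℝ) := by exact_mod_cast Nat.one_le_iff_ne_zero.2 (by omega)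
    exact div_le_one_of_le₀ (h1.trans h2) (by positivity)
  simpa using h

lemma cP_succ (y : ℝ) (n : ℕ) :
    cP y (n + 1) = cP y n + y ^ (2 * (n + 1) + 1) / ((2 * (n + 1) + 1 : ℕ) : ℝ) :=
  Finset.sum_range_succ _ _

lemma hasSum_S {t y : ℝ} (ht0 : 0 ≤ t) (ht1 : t < 1) (hy0 : 0 ≤ y) (hy1 : y ≤ 1) :
    HasSum (fun n : ℕ => t ^ (2 * n) * cP y n) (y * gat (t * y) / (1 - t ^ 2)) := by
  set S : ℕ → ℝ := fun n => t ^ (2 * n) * cP y n with hS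
  set d : ℕ → ℝ := fun n => y * ((t * y) ^ (2 * n) / ((2 * n + 1 : ℕ) : ℝ)) with hdd
  have ht2 : (1:ℝ) - t ^ 2 ≠ 0 := by nlinarith
  have hty : |t * y| < 1 := by
    rw [abs_of_nonneg (mul_nonneg ht0 hy0)]
    nlinarith
  have hd : HasSum d (y * gat (t * y)) := (gat_hasSum hty).mul_left y
  have hdt : Tendsto (fun N => ∑ n ∈ Finset.range N, d n) atTop (nhds (y * gat (t * y))) :=
    hd.tendsto_sum_nat
  have hkey : ∀ N : ℕ, (1 - t ^ 2) * ∑ n ∈ Finset.range (N + 1), S n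
      = (∑ n ∈ Finset.range (N + 1), d n) - t ^ 2 * S N := by
    intro N
    induction N with
    | zero =>
      simp only [Finset.sum_range_one, hS, hdd, cP, Finset.sum_range_one]
      norm_num
      ring
    | succ N ih =>
      rw [Finset.sum_range_succ (f := S), Finset.sum_range_succ (f := d), mul_add, ih]
      have hSsucc : S (N + 1) = t ^ 2 * S N + d (N + 1) := by
        simp only [hS, hdd, cP_succ, mul_pow]
        push_cast
        ring
      rw [hSsucc]
      ring
  have hr : t ^ 2 < 1 := by nlinarith
  have hr' : ‖t ^ 2‖ < 1 := by rw [Real.norm_eq_abs, abs_of_nonneg (by positivity)]; exact hr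
  have hsum_b : Summable (fun n : ℕ => ((n : ℝ) + 1) * (t ^ 2) ^ n) := by
    have h1 : Summable (fun n : ℕ => (n : ℝ) ^ 1 * (t ^ 2) ^ n) :=
      summable_pow_mul_geometric_of_norm_lt_one 1 hr'
    have h2 : Summable (fun n : ℕ => (t ^ 2) ^ n) := summable_geometric_of_lt_one (by positivity) hr
    have := h1.add h2
    refine this.congr fun n => ?_
    ring
  have hb0 : Tendsto (fun n : ℕ => ((n : ℝ) + 1) * (t ^ 2) ^ n) atTop (nhds 0) :=
    hsum_b.tendsto_atTop_zero
  have hS0 : Tendsto S atTop (nhds 0) := by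
    refine squeeze_zero (fun n => mul_nonneg (by positivity) (cP_nonneg hy0 n)) (fun n => ?_) hb0
    have : t ^ (2 * n) = (t ^ 2) ^ n := by rw [← pow_mul]
    rw [hS]
    simp only
    rw [this, mul_comm (((n:ℝ)+1))]
    exact mul_le_mul_of_nonneg_left (cP_le hy0 hy1 n) (by positivity)
  have hform : ∀ N : ℕ, ∑ n ∈ Finset.range (N + 1), S n
      = ((∑ n ∈ Finset.range (N + 1), d n) - t ^ 2 * S N) / (1 - t ^ 2) := by
    intro N
    rw [eq_div_iff ht2, mul_comm, hkey]
  have hdt' : Tendsto (fun N => ∑ n ∈ Finset.range (N + 1), d n) atTop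
      (nhds (y * gat (t * y))) := by
    exact (Filter.tendsto_add_atTop_iff_nat 1).2 hdt
  have hnum : Tendsto (fun N => ((∑ n ∈ Finset.range (N + 1), d n) - t ^ 2 * S N) / (1 - t ^ 2))
      atTop (nhds ((y * gat (t * y) - t ^ 2 * 0) / (1 - t ^ 2))) :=
    (hdt'.sub ((hS0.const_mul (t ^ 2)))).div_const _
  have hPS : Tendsto (fun N => ∑ n ∈ Finset.range (N + 1), S n) atTop
      (nhds (y * gat (t * y) / (1 - t ^ 2))) := by
    have : y * gat (t * y) - t ^ 2 * 0 = y * gat (t * y) := by ring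
    rw [this] at hnum
    exact hnum.congr fun N => (hform N).symm
  have hPS' : Tendsto (fun N => ∑ n ∈ Finset.range N, S n) atTop
      (nhds (y * gat (t * y) / (1 - t ^ 2))) :=
    (Filter.tendsto_add_atTop_iff_nat 1).1 hPS
  exact (hasSum_iff_tendsto_nat_of_nonneg
    (fun n => mul_nonneg (by positivity) (cP_nonneg hy0 n)) _).2 hPS'

lemma F11_eq_integral {x y : ℝ} (hx0 : 0 ≤ x) (hx1 : x < 1) (hy0 : 0 ≤ y) (hy1 : y ≤ 1) :
    F11 x y = ∫ t in (0:ℝ)..x, y * gat (t * y) / (1 - t ^ 2) := by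
  set F : ℕ → ℝ → ℝ := fun n t => t ^ (2 * n) * cP y n with hF
  have hcont : ∀ n, Continuous (F n) := fun n => (continuous_pow _).mul continuous_const
  have hInt : ∀ n, Integrable (F n) (volume.restrict (Set.Ioc 0 x)) := fun n =>
    ((hcont n).integrableOn_Ioc).integrable
  have hterm : ∀ n : ℕ, (x ^ (2 * n + 1) / ((2 * n + 1 : ℕ) : ℝ)) * cP y n
      = ∫ t in Set.Ioc (0:ℝ) x, F n t := by
    intro n
    rw [← intervalIntegral.integral_of_le hx0, hF]
    simp only
    rw [intervalIntegral.integral_mul_const, integral_pow]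
    push_cast
    ring
  have hbound : ∀ n : ℕ, (∫ t in Set.Ioc (0:ℝ) x, ‖F n t‖) ≤ x * (((n:ℝ) + 1) * (x ^ 2) ^ n) := by
    intro n
    have hle : ∀ t ∈ Set.Ioc (0:ℝ) x, ‖F n t‖ ≤ ((n:ℝ) + 1) * (x ^ 2) ^ n := by
      intro t ht
      have ht0 : (0:ℝ) ≤ t := le_of_lt ht.1
      rw [hF, Real.norm_eq_abs, abs_of_nonneg (mul_nonneg (by positivity) (cP_nonneg hy0 n))]
      have h1 : t ^ (2 * n) ≤ x ^ (2 * n) := pow_le_pow_left₀ ht0 ht.2 _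
      have h2 : x ^ (2 * n) = (x ^ 2) ^ n := by rw [← pow_mul]
      calc t ^ (2 * n) * cP y n ≤ x ^ (2 * n) * (((n:ℝ)) + 1) :=
            mul_le_mul h1 (cP_le hy0 hy1 n) (cP_nonneg hy0 n) (by positivity)
        _ = ((n:ℝ) + 1) * (x ^ 2) ^ n := by rw [h2]; ring
    calc (∫ t in Set.Ioc (0:ℝ) x, ‖F n t‖)
        ≤ ∫ _t in Set.Ioc (0:ℝ) x, (((n:ℝ) + 1) * (x ^ 2) ^ n) := by
          refine setIntegral_mono_on (hInt n).norm continuous_const.integrableOn_Ioc measurableSet_Ioc hle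
      _ = x * (((n:ℝ) + 1) * (x ^ 2) ^ n) := by
          rw [setIntegral_const]
          rw [Real.volume_real_Ioc_of_le hx0]
          simp
  have hsumb : Summable (fun n : ℕ => x * (((n:ℝ) + 1) * (x ^ 2) ^ n)) := by
    have hr' : ‖x ^ 2‖ < 1 := by
      rw [Real.norm_eq_abs, abs_of_nonneg (by positivity)]; nlinarith
    have h1 : Summable (fun n : ℕ => (n : ℝ) ^ 1 * (x ^ 2) ^ n) :=
      summable_pow_mul_geometric_of_norm_lt_one 1 hr'
    have h2 : Summable (fun n : ℕ => (x ^ 2) ^ n) :=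
      summable_geometric_of_lt_one (by positivity) (by nlinarith)
    exact ((h1.add h2).congr (fun n => by ring)).mul_left x
  have hsum_norm : Summable (fun n : ℕ => ∫ t in Set.Ioc (0:ℝ) x, ‖F n t‖) := by
    refine hsumb.of_nonneg_of_le (fun n => ?_) hbound
    exact integral_nonneg fun t => norm_nonneg _
  have hswap := integral_tsum_of_summable_integral_norm hInt hsum_norm
  have hF11 : F11 x y = ∑' n : ℕ, ∫ t in Set.Ioc (0:ℝ) x, F n t := by
    rw [F11]
    exact tsum_congr fun n => hterm n
  rw [hF11, hswap]
  rw [intervalIntegral.integral_of_le hx0]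
  refine setIntegral_congr_fun measurableSet_Ioc fun t ht => ?_
  exact (hasSum_S (le_of_lt ht.1) (lt_of_le_of_lt ht.2 hx1) hy0 hy1).tsum_eq

lemma helper_pos {t c e q : ℝ} (ht : 0 < t) (he : 0 < e) (hc : 0 ≤ c)
    (hq : 1 - t * c / e = q / e) (hq0 : 0 < q) :
    dgl (t * c / e) * (c / e ^ 2) = -(Real.log q - Real.log e) / (t * e) := by
  rcases eq_or_lt_of_le hc with rfl | hc
  · have : q = e := by field_simp at hq; linarith
    simp [this]
  · have hz : t * c / e ≠ 0 := by positivity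
    rw [dgl, if_neg hz, hq, Real.log_div hq0.ne' he.ne']
    field_simp

lemma helper_neg {t c e q : ℝ} (ht : 0 < t) (he : 0 < e) (hc : 0 ≤ c)
    (hq : 1 + t * c / e = q / e) (hq0 : 0 < q) :
    dgl (-(t * c) / e) * (-(c / e ^ 2)) = -(Real.log q - Real.log e) / (t * e) := by
  rcases eq_or_lt_of_le hc with rfl | hc
  · have : q = e := by field_simp at hq; linarith
    simp [this]
  · have hz : -(t * c) / e ≠ 0 := by
      apply div_ne_zero _ he.ne'
      intro h
      nlinarith [neg_eq_zero.1 h]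
    have h1z : 1 - (-(t * c) / e) = q / e := by
      rw [← hq]; ring
    rw [dgl, if_neg hz, h1z, Real.log_div hq0.ne' he.ne']
    field_simp

lemma L_hasDerivAt {y t : ℝ} (hy0 : 0 ≤ y) (hy1 : y ≤ 1) (ht0 : 0 ≤ t) (ht1 : t < 1) :
    HasDerivAt (fun s : ℝ => li2 (s * (1 + y) / (1 + s)) - li2 (s * (1 - y) / (1 + s))
        - li2 (-(s * (1 + y)) / (1 - s)) + li2 (-(s * (1 - y)) / (1 - s)))
      (dgl (t * (1 + y) / (1 + t)) * ((1 + y) / (1 + t) ^ 2)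
        - dgl (t * (1 - y) / (1 + t)) * ((1 - y) / (1 + t) ^ 2)
        - dgl (-(t * (1 + y)) / (1 - t)) * (-((1 + y) / (1 - t) ^ 2))
        + dgl (-(t * (1 - y)) / (1 - t)) * (-((1 - y) / (1 - t) ^ 2))) t := by
  have h1pt : (0:ℝ) < 1 + t := by linarith
  have h1mt : (0:ℝ) < 1 - t := by linarith
  have hz1 : HasDerivAt (fun s : ℝ => s * (1 + y) / (1 + s)) ((1 + y) / (1 + t) ^ 2) t := by
    have h := ((hasDerivAt_id t).mul_const (1 + y)).div ((hasDerivAt_id t).const_add 1) h1pt.ne'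
    refine h.congr_deriv ?_
    simp only [id]
    ring
  have hz2 : HasDerivAt (fun s : ℝ => s * (1 - y) / (1 + s)) ((1 - y) / (1 + t) ^ 2) t := by
    have h := ((hasDerivAt_id t).mul_const (1 - y)).div ((hasDerivAt_id t).const_add 1) h1pt.ne'
    refine h.congr_deriv ?_
    simp only [id]
    ring
  have hz3 : HasDerivAt (fun s : ℝ => -(s * (1 + y)) / (1 - s)) (-((1 + y) / (1 - t) ^ 2)) t := by
    have h := (((hasDerivAt_id t).mul_const (1 + y)).neg).div ((hasDerivAt_id t).const_sub 1) h1mt.ne'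
    refine h.congr_deriv ?_
    simp only [id, Pi.neg_apply]
    ring
  have hz4 : HasDerivAt (fun s : ℝ => -(s * (1 - y)) / (1 - s)) (-((1 - y) / (1 - t) ^ 2)) t := by
    have h := (((hasDerivAt_id t).mul_const (1 - y)).neg).div ((hasDerivAt_id t).const_sub 1) h1mt.ne'
    refine h.congr_deriv ?_
    simp only [id, Pi.neg_apply]
    ring
  have ha1 : t * (1 + y) / (1 + t) < 1 := by
    rw [div_lt_one h1pt]; nlinarith
  have ha2 : t * (1 - y) / (1 + t) < 1 := by
    rw [div_lt_one h1pt]; nlinarith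
  have ha3 : -(t * (1 + y)) / (1 - t) < 1 := by
    have : -(t * (1 + y)) / (1 - t) ≤ 0 := div_nonpos_of_nonpos_of_nonneg (by nlinarith) h1mt.le
    linarith
  have ha4 : -(t * (1 - y)) / (1 - t) < 1 := by
    have : -(t * (1 - y)) / (1 - t) ≤ 0 := div_nonpos_of_nonpos_of_nonneg (by nlinarith) h1mt.le
    linarith
  have H1 := (li2_hasDerivAt ha1).comp t hz1
  have H2 := (li2_hasDerivAt ha2).comp t hz2
  have H3 := (li2_hasDerivAt ha3).comp t hz3
  have H4 := (li2_hasDerivAt ha4).comp t hz4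
  exact ((H1.sub H2).sub H3).add H4

lemma ell_eq {y t : ℝ} (hy0 : 0 < y) (hy1 : y ≤ 1) (ht0 : 0 ≤ t) (ht1 : t < 1) :
    dgl (t * (1 + y) / (1 + t)) * ((1 + y) / (1 + t) ^ 2)
      - dgl (t * (1 - y) / (1 + t)) * ((1 - y) / (1 + t) ^ 2)
      - dgl (-(t * (1 + y)) / (1 - t)) * (-((1 + y) / (1 - t) ^ 2))
      + dgl (-(t * (1 - y)) / (1 - t)) * (-((1 - y) / (1 - t) ^ 2))
    = 4 * (y * gat (t * y) / (1 - t ^ 2)) := by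
  rcases eq_or_lt_of_le ht0 with rfl | ht
  · norm_num [dgl, gat]
    ring
  · have h1pt : (0:ℝ) < 1 + t := by linarith
    have h1mt : (0:ℝ) < 1 - t := by linarith
    have hty : t * y < 1 := by nlinarith
    have h1pty : (0:ℝ) < 1 + t * y := by nlinarith
    have h1mty : (0:ℝ) < 1 - t * y := by nlinarith
    have T1 := helper_pos (c := 1 + y) (q := 1 - t * y) ht h1pt (by linarith)
      (by field_simp; ring) h1mty
    have T2 := helper_pos (c := 1 - y) (q := 1 + t * y) ht h1pt (by linarith)
      (by field_simp; ring) h1pty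
    have T3 := helper_neg (c := 1 + y) (q := 1 + t * y) ht h1mt (by linarith)
      (by field_simp; ring) h1pty
    have T4 := helper_neg (c := 1 - y) (q := 1 - t * y) ht h1mt (by linarith)
      (by field_simp; ring) h1mty
    rw [T1, T2, T3, T4, gat, if_neg (by positivity : t * y ≠ 0)]
    have hne : (1:ℝ) - t ^ 2 ≠ 0 := by nlinarith
    field_simp
    ring

theorem F11_closed_form (x y : ℝ) (hx0 : 0 ≤ x) (hx1 : x < 1)
    (hy0 : 0 ≤ y) (hy1 : y ≤ 1) :
    4 * F11 x y =
      li2 (x * (1 + y) / (1 + x)) - li2 (x * (1 - y) / (1 + x))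
        - li2 (-(x * (1 + y)) / (1 - x)) + li2 (-(x * (1 - y)) / (1 - x)) := by
  rcases eq_or_lt_of_le hy0 with rfl | hy
  · have hF : F11 x 0 = 0 := by
      simp [F11]
    rw [hF]
    norm_num
  · set L : ℝ → ℝ := fun s => li2 (s * (1 + y) / (1 + s)) - li2 (s * (1 - y) / (1 + s))
        - li2 (-(s * (1 + y)) / (1 - s)) + li2 (-(s * (1 - y)) / (1 - s)) with hL
    set ell : ℝ → ℝ := fun t => dgl (t * (1 + y) / (1 + t)) * ((1 + y) / (1 + t) ^ 2)
        - dgl (t * (1 - y) / (1 + t)) * ((1 - y) / (1 + t) ^ 2)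
        - dgl (-(t * (1 + y)) / (1 - t)) * (-((1 + y) / (1 - t) ^ 2))
        + dgl (-(t * (1 - y)) / (1 - t)) * (-((1 - y) / (1 - t) ^ 2)) with hell
    set A : ℝ → ℝ := fun t => 4 * (y * gat (t * y) / (1 - t ^ 2)) with hA
    have huIcc : Set.uIcc (0:ℝ) x = Set.Icc 0 x := Set.uIcc_of_le hx0
    have hEq : Set.EqOn ell A (Set.uIcc 0 x) := by
      intro t ht
      rw [huIcc] at ht
      exact ell_eq hy hy1 ht.1 (lt_of_le_of_lt ht.2 hx1)
    have hAcont : ContinuousOn A (Set.uIcc 0 x) := by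
      intro t ht
      rw [huIcc] at ht
      have ht1 : t < 1 := lt_of_le_of_lt ht.2 hx1
      have hty1 : t * y < 1 := by nlinarith [ht.1]
      have hty2 : -1 < t * y := by nlinarith [ht.1]
      have hne : (1:ℝ) - t ^ 2 ≠ 0 := by nlinarith [ht.1]
      have hmul : ContinuousAt (fun s : ℝ => s * y) t := by fun_prop
      have hgt : ContinuousAt (fun s : ℝ => gat (s * y)) t := by
        have := ContinuousAt.comp (x := t) (g := gat) (f := fun s : ℝ => s * y)
          (gat_contAt hty2 hty1) hmul
        exact this
      exact (continuousAt_const.mul ((continuousAt_const.mul hgt).div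
        (by fun_prop) hne)).continuousWithinAt
    have hA_ii : IntervalIntegrable A volume 0 x := hAcont.intervalIntegrable
    have hell_ii : IntervalIntegrable ell volume 0 x := by
      rw [intervalIntegrable_iff_integrableOn_Ioc_of_le hx0] at hA_ii ⊢
      refine hA_ii.congr_fun ?_ measurableSet_Ioc
      intro t ht
      exact (hEq (by rw [huIcc]; exact ⟨ht.1.le, ht.2⟩)).symm
    have hderiv : ∀ t ∈ Set.uIcc (0:ℝ) x, HasDerivAt L (ell t) t := by
      intro t ht
      rw [huIcc] at ht
      exact L_hasDerivAt hy0 hy1 ht.1 (lt_of_le_of_lt ht.2 hx1)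
    have hftc : ∫ t in (0:ℝ)..x, ell t = L x - L 0 :=
      intervalIntegral.integral_eq_sub_of_hasDerivAt hderiv hell_ii
    have hL0 : L 0 = 0 := by
      rw [hL]
      norm_num [li2_zero]
    have step1 : 4 * F11 x y = ∫ t in (0:ℝ)..x, A t := by
      rw [F11_eq_integral hx0 hx1 hy0 hy1, hA, ← intervalIntegral.integral_const_mul]
    have step2 : (∫ t in (0:ℝ)..x, A t) = ∫ t in (0:ℝ)..x, ell t :=
      (intervalIntegral.integral_congr hEq).symm
    rw [step1, step2, hftc, hL0, sub_zero]
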